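/- Fix n ≥ 2. Let f_C, f_1, …, f_n : ℝ^m → ℝ be continuous, strictly positive functions with f_i(x) → 0 as ‖x‖ → ∞ for each i = 1, …, n, such that η_i := ∫ f_C(x) f_i(x) dx ∈ (0, ∞) for each i and η_t := ∫ f_C(x) ∏_{i=1}^n f_i(x) dx ∈ (0, ∞). Define the input densities q_i(x) = f_C(x) f_i(x)/η_i, the true fused density p_t(x) = f_C(x) ∏_{i=1}^n f_i(x) / η_t, and, for nonnegative weights ω_1, …, ω_n with ∑ ω_i = 1, the linear opinion pool p_f(x) = ∑_{i=1}^n ω_i q_i(x). Then p_f(x)/p_t(x) → ∞ as ‖x‖ → ∞; in particular, the set {x : p_f(x) < p_t(x)} is bounded. -/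

import Mathlib

open MeasureTheory Filter

/-- The linear opinion pool `p_f = ∑ ω_i q_i` satisfies `p_f / p_t → ∞` at infinity,
where `p_t` is the ideally fused density; in particular `{x | p_f x < p_t x}` is bounded. -/
theorem linear_opinion_pool_weakly_conservative
    (m n : ℕ) (hn : 2 ≤ n)
    (fC : (Fin m → ℝ) → ℝ) (f : Fin n → (Fin m → ℝ) → ℝ)
    (hfC_cont : Continuous fC) (hfC_pos : ∀ x, 0 < fC x)
    (hf_cont : ∀ i, Continuous (f i)) (hf_pos : ∀ i x, 0 < f i x)
    (hf_zero : ∀ i, Tendsto (f i) (comap (fun x => ‖x‖) atTop) (nhds 0))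
    (η : Fin n → ℝ)
    (hη : ∀ i, η i = ∫ x, fC x * f i x)
    (hη_int : ∀ i, Integrable (fun x => fC x * f i x))
    (hη_pos : ∀ i, 0 < η i)
    (ηt : ℝ)
    (hηt : ηt = ∫ x, fC x * ∏ i, f i x)
    (hηt_int : Integrable (fun x => fC x * ∏ i, f i x))
    (hηt_pos : 0 < ηt)
    (ω : Fin n → ℝ) (hω_nonneg : ∀ i, 0 ≤ ω i) (hω_sum : ∑ i, ω i = 1)
    (q : Fin n → (Fin m → ℝ) → ℝ) (hq : ∀ i x, q i x = fC x * f i x / η i)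
    (pt pf : (Fin m → ℝ) → ℝ)
    (hpt : ∀ x, pt x = fC x * (∏ i, f i x) / ηt)
    (hpf : ∀ x, pf x = ∑ i, ω i * q i x) :
    Tendsto (fun x => pf x / pt x) (comap (fun x => ‖x‖) atTop) atTop ∧
    Bornology.IsBounded {x | pf x < pt x} := by
  -- pick a positive weight
  obtain ⟨k, hk⟩ : ∃ k, 0 < ω k := by
    by_contra h
    push_neg at h
    have h0 : ∑ i, ω i = 0 :=
      Finset.sum_eq_zero fun i _ => le_antisymm (h i) (hω_nonneg i)
    rw [h0] at hω_sum; norm_num at hω_sum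
  set L := comap (fun x : Fin m → ℝ => ‖x‖) atTop with hL
  set g : (Fin m → ℝ) → ℝ := fun x => ∏ j ∈ Finset.univ.erase k, f j x with hg
  have hg_pos : ∀ x, 0 < g x := fun x =>
    Finset.prod_pos fun j _ => hf_pos j x
  have hpt_pos : ∀ x, 0 < pt x := by
    intro x
    rw [hpt]
    have := hfC_pos x
    have : 0 < ∏ i, f i x := Finset.prod_pos fun j _ => hf_pos j x
    positivity
  have herase : (Finset.univ.erase k).Nonempty := by
    rw [← Finset.card_pos, Finset.card_erase_of_mem (Finset.mem_univ k),
      Finset.card_univ, Fintype.card_fin]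
    omega
  have hg_zero : Tendsto g L (nhds 0) := by
    have h := tendsto_finset_prod (Finset.univ.erase k)
      (fun j (_ : j ∈ Finset.univ.erase k) => hf_zero j)
    rw [Finset.prod_const, Finset.card_erase_of_mem (Finset.mem_univ k),
      Finset.card_univ, Fintype.card_fin, zero_pow (by omega : n - 1 ≠ 0)] at h
    exact h
  set c : ℝ := ω k * ηt / η k with hc
  have hc_pos : 0 < c := by
    have := hη_pos k
    positivity
  have key : ∀ x, c / g x ≤ pf x / pt x := by
    intro x
    have h1 : ω k * q k x ≤ pf x := by
      rw [hpf]
      refine Finset.single_le_sum (f := fun i => ω i * q i x) (fun i _ => mul_nonneg (hω_nonneg i) ?_)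
        (Finset.mem_univ k)
      rw [hq]
      have := hfC_pos x; have := hf_pos i x; have := hη_pos i
      positivity
    have hprod : ∏ i, f i x = f k x * g x :=
      (Finset.mul_prod_erase _ _ (Finset.mem_univ k)).symm
    have h2 : c / g x = (ω k * q k x) / pt x := by
      rw [hq, hpt, hprod, hc]
      have h3 := (hfC_pos x).ne'
      have h4 := (hf_pos k x).ne'
      have h5 := (hη_pos k).ne'
      have h6 := hηt_pos.ne'
      have h7 := (hg_pos x).ne'
      field_simp
    rw [h2]
    exact div_le_div_of_nonneg_right h1 (hpt_pos x).le
  have hmain : Tendsto (fun x => pf x / pt x) L atTop := by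
    have hinv : Tendsto (fun x => (g x)⁻¹) L atTop := by
      refine Tendsto.inv_tendsto_nhdsGT_zero ?_
      exact tendsto_nhdsWithin_of_tendsto_nhds_of_eventually_within _ hg_zero
        (Eventually.of_forall fun x => hg_pos x)
    have : Tendsto (fun x => c / g x) L atTop := by
      simpa [div_eq_mul_inv] using hinv.const_mul_atTop hc_pos
    exact tendsto_atTop_mono key this
  refine ⟨hmain, ?_⟩
  have hev : ∀ᶠ x in L, 1 ≤ pf x / pt x := hmain.eventually_ge_atTop 1
  rw [hL, eventually_comap, eventually_atTop] at hev
  obtain ⟨R, hR⟩ := hev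
  have hsub : {x | pf x < pt x} ⊆ Metric.ball 0 R := by
    intro x hx
    simp only [Set.mem_setOf_eq] at hx
    by_contra hxR
    rw [Metric.mem_ball, dist_zero_right, not_lt] at hxR
    have h1 : 1 ≤ pf x / pt x := hR ‖x‖ hxR x rfl
    have := (one_le_div (hpt_pos x)).mp h1
    linarith
  exact (Metric.isBounded_ball).subset hsub
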